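/- Suppose the excess entropy E = Σ_{L=1}^∞ [h_μ(L) - h_μ] converges. Then the series Σ_{L=2}^∞ (L-1)·[H(L) - 2H(L-1) + H(L-2)] converges and E = -Σ_{L=2}^∞ (L-1)·[H(L) - 2H(L-1) + H(L-2)]; that is, the excess entropy is the predictability-gain-weighted average block length. -/

import Mathlib

set_option linter.unusedSectionVars false
set_option linter.unusedVariables false

open MeasureTheory Real Filter

noncomputable def cylP {A : Type*} [MeasurableSpace A] (μ : Measure (ℕ → A)) {L : ℕ}
    (w : Fin L → A) : ℝ :=
  (μ {x : ℕ → A | ∀ i : Fin L, x i.1 = w i}).toReal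

noncomputable def blockH {A : Type*} [MeasurableSpace A] [Fintype A]
    (μ : Measure (ℕ → A)) (L : ℕ) : ℝ :=
  -∑ w : Fin L → A, cylP μ w * Real.logb 2 (cylP μ w)

def shift {A : Type*} : (ℕ → A) → (ℕ → A) := fun x n => x (n + 1)

section Aux

variable {A : Type*} [MeasurableSpace A] [MeasurableSingletonClass A] [Fintype A]

def cylSet {A : Type*} {L : ℕ} (w : Fin L → A) : Set (ℕ → A) :=
  {x : ℕ → A | ∀ i : Fin L, x i.1 = w i}

lemma measurableSet_cylSet {L : ℕ} (w : Fin L → A) : MeasurableSet (cylSet w) := by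
  have : cylSet w = ⋂ i : Fin L, (fun x : ℕ → A => x i.1) ⁻¹' {w i} := by
    ext x; simp [cylSet, Set.mem_iInter]
  rw [this]
  exact MeasurableSet.iInter fun i => (measurable_pi_apply _) (measurableSet_singleton _)

lemma forall_cons_iff {L : ℕ} {x : ℕ → A} {a : A} {w : Fin L → A} :
    (∀ i : Fin (L+1), x i.1 = (Fin.cons a w : Fin (L+1) → A) i) ↔ x 0 = a ∧ ∀ i : Fin L, x (i.1+1) = w i := by
  constructor
  · intro h
    refine ⟨by simpa using h 0, fun i => ?_⟩
    simpa using h i.succ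
  · rintro ⟨h0, h⟩ i
    induction i using Fin.cases with
    | zero => simpa using h0
    | succ j => simpa using h j

lemma forall_snoc_iff {L : ℕ} {x : ℕ → A} {b : A} {w : Fin L → A} :
    (∀ i : Fin (L+1), x i.1 = (Fin.snoc w b : Fin (L+1) → A) i) ↔ (∀ i : Fin L, x i.1 = w i) ∧ x L = b := by
  constructor
  · intro h
    refine ⟨fun i => ?_, by simpa using h (Fin.last L)⟩
    simpa using h i.castSucc
  · rintro ⟨h, hb⟩ i
    induction i using Fin.lastCases with
    | last => simpa using hb
    | cast j => simpa using h j

lemma sum_snoc_index {β : Type*} [AddCommMonoid β] {L : ℕ} (f : (Fin (L+1) → A) → β) :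
    ∑ u : Fin (L+1) → A, f u = ∑ w : Fin L → A, ∑ b : A, f (Fin.snoc w b) := by
  classical
  calc ∑ u : Fin (L+1) → A, f u = ∑ p : (Fin L → A) × A, f (Fin.snoc p.1 p.2) :=
        (Fintype.sum_bijective (fun p : (Fin L → A) × A => Fin.snoc p.1 p.2)
          (Function.bijective_iff_has_inverse.2 ⟨fun u => (Fin.init u, u (Fin.last L)),
            fun p => by simp, fun u => by simp⟩)
          (fun p => f (Fin.snoc p.1 p.2)) f (fun p => rfl)).symm
    _ = ∑ w : Fin L → A, ∑ b : A, f (Fin.snoc w b) := Fintype.sum_prod_type _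

lemma sum_cons_index {β : Type*} [AddCommMonoid β] {L : ℕ} (f : (Fin (L+1) → A) → β) :
    ∑ u : Fin (L+1) → A, f u = ∑ a : A, ∑ w : Fin L → A, f (Fin.cons a w) := by
  classical
  calc ∑ u : Fin (L+1) → A, f u = ∑ p : A × (Fin L → A), f (Fin.cons p.1 p.2) :=
        (Fintype.sum_bijective (fun p : A × (Fin L → A) => Fin.cons p.1 p.2)
          (Function.bijective_iff_has_inverse.2 ⟨fun u => (u 0, Fin.tail u),
            fun p => by simp, fun u => by simp⟩)
          (fun p => f (Fin.cons p.1 p.2)) f (fun p => rfl)).symm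
    _ = ∑ a : A, ∑ w : Fin L → A, f (Fin.cons a w) := Fintype.sum_prod_type _

variable (μ : Measure (ℕ → A)) [IsProbabilityMeasure μ]

lemma cylP_nonneg {L : ℕ} (w : Fin L → A) : 0 ≤ cylP μ w := ENNReal.toReal_nonneg

lemma cylP_mono {L M : ℕ} {w : Fin L → A} {v : Fin M → A} (h : cylSet w ⊆ cylSet v) :
    cylP μ w ≤ cylP μ v :=
  ENNReal.toReal_mono (measure_ne_top μ _) (measure_mono h)

lemma cylP_le_init {L : ℕ} (u : Fin (L+1) → A) : cylP μ u ≤ cylP μ (Fin.init u) := by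
  refine cylP_mono μ fun x hx => fun i => ?_
  have := hx i.castSucc
  simpa [Fin.init] using this

lemma sum_cylP_snoc {L : ℕ} (w : Fin L → A) :
    ∑ b : A, cylP μ (Fin.snoc w b) = cylP μ w := by
  classical
  have hdisj : Pairwise (Function.onFun Disjoint fun b : A => cylSet (Fin.snoc w b)) := by
    intro b b' hbb'
    refine Set.disjoint_left.2 fun x hx hx' => hbb' ?_
    have h1 := (forall_snoc_iff.1 hx).2
    have h2 := (forall_snoc_iff.1 hx').2
    rw [← h1, ← h2]
  have hU : (⋃ b : A, cylSet (Fin.snoc w b)) = cylSet w := by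
    ext x
    simp only [Set.mem_iUnion, cylSet, Set.mem_setOf_eq]
    constructor
    · rintro ⟨b, hb⟩
      exact (forall_snoc_iff.1 hb).1
    · intro hx
      exact ⟨x L, forall_snoc_iff.2 ⟨hx, rfl⟩⟩
  have hm := measure_iUnion (μ := μ) hdisj (fun b => measurableSet_cylSet (Fin.snoc w b))
  rw [hU, tsum_fintype] at hm
  have := congrArg ENNReal.toReal hm
  rw [ENNReal.toReal_sum (fun b _ => measure_ne_top μ _)] at this
  exact this.symm

lemma shift_preimage_cylSet {L : ℕ} (w : Fin L → A) :
    shift ⁻¹' cylSet w = {x : ℕ → A | ∀ i : Fin L, x (i.1+1) = w i} := by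
  ext x; simp [cylSet, shift]

lemma sum_cylP_cons (hstat : MeasurePreserving (shift (A := A)) μ μ) {L : ℕ} (w : Fin L → A) :
    ∑ a : A, cylP μ (Fin.cons a w) = cylP μ w := by
  classical
  have hdisj : Pairwise (Function.onFun Disjoint fun a : A => cylSet (Fin.cons a w)) := by
    intro b b' hbb'
    refine Set.disjoint_left.2 fun x hx hx' => hbb' ?_
    have h1 := (forall_cons_iff.1 hx).1
    have h2 := (forall_cons_iff.1 hx').1
    rw [← h1, ← h2]
  have hU : (⋃ a : A, cylSet (Fin.cons a w)) = shift ⁻¹' cylSet w := by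
    rw [shift_preimage_cylSet]
    ext x
    simp only [Set.mem_iUnion, cylSet, Set.mem_setOf_eq]
    constructor
    · rintro ⟨a, ha⟩
      exact (forall_cons_iff.1 ha).2
    · intro hx
      exact ⟨x 0, forall_cons_iff.2 ⟨rfl, hx⟩⟩
  have hm := measure_iUnion (μ := μ) hdisj (fun a => measurableSet_cylSet (Fin.cons a w))
  rw [hU, hstat.measure_preimage (measurableSet_cylSet w).nullMeasurableSet,
    tsum_fintype] at hm
  have := congrArg ENNReal.toReal hm
  rw [ENNReal.toReal_sum (fun a _ => measure_ne_top μ _)] at this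
  exact this.symm

lemma cylP_le_tail (hstat : MeasurePreserving (shift (A := A)) μ μ) {L : ℕ}
    (u : Fin (L+1) → A) : cylP μ u ≤ cylP μ (Fin.tail u) := by
  have hsub : cylSet u ⊆ shift ⁻¹' cylSet (Fin.tail u) := by
    rw [shift_preimage_cylSet]
    intro x hx i
    have := hx i.succ
    simpa [Fin.tail] using this
  calc cylP μ u ≤ (μ (shift ⁻¹' cylSet (Fin.tail u))).toReal :=
        ENNReal.toReal_mono (measure_ne_top μ _) (measure_mono hsub)
    _ = cylP μ (Fin.tail u) := by
        rw [hstat.measure_preimage (measurableSet_cylSet _).nullMeasurableSet]; rfl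

lemma sum_cylP_univ : ∀ L : ℕ, ∑ w : Fin L → A, cylP μ w = 1 := by
  intro L
  induction L with
  | zero =>
      rw [Fintype.sum_unique]
      have : cylSet (default : Fin 0 → A) = Set.univ := by
        ext x; simp [cylSet]
      simp only [cylP]
      rw [show {x : ℕ → A | ∀ i : Fin 0, x i.1 = (default : Fin 0 → A) i} = Set.univ from this]
      simp
  | succ L ih =>
      rw [sum_snoc_index, ← ih]
      exact Finset.sum_congr rfl fun w _ => sum_cylP_snoc μ w

lemma entTail (hstat : MeasurePreserving (shift (A := A)) μ μ) (L : ℕ) :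
    ∑ u : Fin (L+2) → A, cylP μ u * logb 2 (cylP μ (Fin.tail u))
      = ∑ v : Fin (L+1) → A, cylP μ v * logb 2 (cylP μ v) := by
  rw [sum_cons_index (fun u => cylP μ u * logb 2 (cylP μ (Fin.tail u))), Finset.sum_comm]
  refine Finset.sum_congr rfl fun v _ => ?_
  simp only [Fin.tail_cons]
  rw [← Finset.sum_mul, sum_cylP_cons μ hstat v]

lemma entInit (L : ℕ) :
    ∑ u : Fin (L+2) → A, cylP μ u * logb 2 (cylP μ (Fin.init u))
      = ∑ v : Fin (L+1) → A, cylP μ v * logb 2 (cylP μ v) := by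
  rw [sum_snoc_index (fun u => cylP μ u * logb 2 (cylP μ (Fin.init u)))]
  refine Finset.sum_congr rfl fun v _ => ?_
  simp only [Fin.init_snoc]
  rw [← Finset.sum_mul, sum_cylP_snoc μ v]

lemma entMid (hstat : MeasurePreserving (shift (A := A)) μ μ) (L : ℕ) :
    ∑ u : Fin (L+2) → A, cylP μ u * logb 2 (cylP μ (Fin.init (Fin.tail u)))
      = ∑ w : Fin L → A, cylP μ w * logb 2 (cylP μ w) := by
  rw [sum_cons_index (fun u => cylP μ u * logb 2 (cylP μ (Fin.init (Fin.tail u)))),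
    Finset.sum_comm]
  simp only [Fin.tail_cons]
  have h1 : ∀ v : Fin (L+1) → A,
      ∑ a : A, cylP μ (Fin.cons a v) * logb 2 (cylP μ (Fin.init v))
        = cylP μ v * logb 2 (cylP μ (Fin.init v)) := by
    intro v; rw [← Finset.sum_mul, sum_cylP_cons μ hstat v]
  rw [Finset.sum_congr rfl fun v _ => h1 v,
    sum_snoc_index (fun v => cylP μ v * logb 2 (cylP μ (Fin.init v)))]
  refine Finset.sum_congr rfl fun w _ => ?_
  simp only [Fin.init_snoc]
  rw [← Finset.sum_mul, sum_cylP_snoc μ w]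

lemma sumQR (hstat : MeasurePreserving (shift (A := A)) μ μ) (L : ℕ) :
    ∑ u : Fin (L+2) → A, cylP μ (Fin.tail u) * cylP μ (Fin.init u)
        / cylP μ (Fin.init (Fin.tail u)) = 1 := by
  have key : ∀ w : Fin L → A, ∑ a : A, ∑ b : A,
      cylP μ (Fin.snoc w b) * cylP μ (Fin.cons a w) / cylP μ w = cylP μ w := by
    intro w
    rcases eq_or_ne (cylP μ w) 0 with h0 | h0
    · have hz : ∀ b : A, cylP μ (Fin.snoc w b) = 0 := fun b =>
        le_antisymm (by simpa [Fin.init_snoc, h0] using cylP_le_init μ (Fin.snoc w b))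
          (cylP_nonneg μ _)
      simp [hz, h0]
    · have ha : ∀ a : A, ∑ b : A,
          cylP μ (Fin.snoc w b) * cylP μ (Fin.cons a w) / cylP μ w
            = cylP μ (Fin.cons a w) := by
        intro a
        have step : ∀ b : A, cylP μ (Fin.snoc w b) * cylP μ (Fin.cons a w) / cylP μ w
            = cylP μ (Fin.snoc w b) * (cylP μ (Fin.cons a w) / cylP μ w) := fun b =>
          mul_div_assoc _ _ _
        rw [Finset.sum_congr rfl fun b _ => step b, ← Finset.sum_mul, sum_cylP_snoc μ w,
          mul_comm, div_mul_cancel₀ _ h0]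
      rw [Finset.sum_congr rfl fun a _ => ha a, sum_cylP_cons μ hstat w]
  set g : (Fin (L+2) → A) → ℝ := fun u =>
    cylP μ (Fin.tail u) * cylP μ (Fin.init u) / cylP μ (Fin.init (Fin.tail u)) with hg
  show ∑ u : Fin (L+2) → A, g u = 1
  rw [sum_cons_index g]
  have h2 : ∀ a : A, ∑ v : Fin (L+1) → A, g (Fin.cons a v)
      = ∑ w : Fin L → A, ∑ b : A,
          cylP μ (Fin.snoc w b) * cylP μ (Fin.cons a w) / cylP μ w := by
    intro a
    rw [sum_snoc_index (fun v => g (Fin.cons a v))]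
    refine Finset.sum_congr rfl fun w _ => Finset.sum_congr rfl fun b _ => ?_
    rw [hg]
    simp only []
    rw [Fin.tail_cons, Fin.cons_snoc_eq_snoc_cons, Fin.init_snoc, Fin.init_snoc]
  rw [Finset.sum_congr rfl fun a _ => h2 a, Finset.sum_comm]
  rw [Finset.sum_congr rfl fun w _ => key w, sum_cylP_univ μ L]

lemma blockH_submod (hstat : MeasurePreserving (shift (A := A)) μ μ) (L : ℕ) :
    blockH μ (L+2) + blockH μ L ≤ 2 * blockH μ (L+1) := by
  have hlog2 : (0:ℝ) < Real.log 2 := Real.log_pos one_lt_two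
  set f : (Fin (L+2) → A) → ℝ := fun u =>
    cylP μ u * logb 2 (cylP μ u) + cylP μ u * logb 2 (cylP μ (Fin.init (Fin.tail u)))
      - cylP μ u * logb 2 (cylP μ (Fin.tail u)) - cylP μ u * logb 2 (cylP μ (Fin.init u))
    with hf
  have key : ∀ u : Fin (L+2) → A,
      (cylP μ u - cylP μ (Fin.tail u) * cylP μ (Fin.init u)
        / cylP μ (Fin.init (Fin.tail u))) / Real.log 2 ≤ f u := by
    intro u
    set p := cylP μ u
    set q := cylP μ (Fin.tail u) with hqdef
    set r := cylP μ (Fin.init u)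
    set s := cylP μ (Fin.init (Fin.tail u))
    have hp0 : 0 ≤ p := cylP_nonneg μ u
    have hq0 : 0 ≤ q := cylP_nonneg μ _
    have hr0 : 0 ≤ r := cylP_nonneg μ _
    have hs0 : 0 ≤ s := cylP_nonneg μ _
    have hpq : p ≤ q := cylP_le_tail μ hstat u
    have hpr : p ≤ r := cylP_le_init μ u
    have hqs : q ≤ s := cylP_le_init μ (Fin.tail u)
    rcases eq_or_lt_of_le hp0 with h0 | h0
    · have hpz : cylP μ u = 0 := h0.symm
      have : f u = 0 := by simp [hf, hpz]
      rw [this]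
      apply div_nonpos_of_nonpos_of_nonneg _ hlog2.le
      have : 0 ≤ q * r / s := by positivity
      simp only [← h0]
      linarith
    · have hq : 0 < q := lt_of_lt_of_le h0 hpq
      have hr : 0 < r := lt_of_lt_of_le h0 hpr
      have hs : 0 < s := lt_of_lt_of_le hq hqs
      have harg : 0 < q * r / (p * s) := by positivity
      have hub := Real.log_le_sub_one_of_pos harg
      have heq : f u = (p * Real.log p + p * Real.log s - p * Real.log q
          - p * Real.log r) / Real.log 2 := by
        simp only [hf, Real.logb]
        ring
      have hlogeq : Real.log (q * r / (p * s))
          = Real.log q + Real.log r - Real.log p - Real.log s := by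
        rw [Real.log_div (by positivity) (by positivity), Real.log_mul hq.ne' hr.ne',
          Real.log_mul h0.ne' hs.ne']
        ring
      rw [heq, div_le_div_iff_of_pos_right hlog2]
      have hmul : p * Real.log (q * r / (p * s)) ≤ p * (q * r / (p * s) - 1) :=
        mul_le_mul_of_nonneg_left hub hp0
      have hfs : p * (q * r / (p * s) - 1) = q * r / s - p := by
        field_simp
      rw [hlogeq] at hmul
      nlinarith [hmul]
  have hsum := Finset.sum_le_sum (fun u (_ : u ∈ Finset.univ) => key u)
  have hlhs : ∑ u : Fin (L+2) → A,
      (cylP μ u - cylP μ (Fin.tail u) * cylP μ (Fin.init u)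
        / cylP μ (Fin.init (Fin.tail u))) / Real.log 2 = 0 := by
    rw [← Finset.sum_div, Finset.sum_sub_distrib, sum_cylP_univ μ (L+2), sumQR μ hstat L]
    simp
  have hrhs : ∑ u : Fin (L+2) → A, f u
      = 2 * blockH μ (L+1) - blockH μ (L+2) - blockH μ L := by
    simp only [hf]
    rw [Finset.sum_sub_distrib, Finset.sum_sub_distrib, Finset.sum_add_distrib,
      entTail μ hstat L, entInit μ L, entMid μ hstat L]
    simp only [blockH]
    ring
  rw [hlhs, hrhs] at hsum
  linarith

end Aux

lemma abel_identity (H : ℕ → ℝ) (c : ℝ) (N : ℕ) :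
    ∑ L ∈ Finset.range N, ((L : ℝ) + 1) * (H (L + 2) - 2 * H (L + 1) + H L)
      = N * (H (N + 1) - H N - c) - ∑ L ∈ Finset.range N, (H (L + 1) - H L - c) := by
  induction N with
  | zero => simp
  | succ N ih =>
      rw [Finset.sum_range_succ, Finset.sum_range_succ, ih]
      push_cast
      ring


/-- If the excess entropy `E = Σ_{L=1}^∞ [h_μ(L) - h_μ]` converges, then
`Σ_{L=2}^∞ (L-1)·[H(L) - 2H(L-1) + H(L-2)]` converges and `E` equals minus this sum. -/
theorem excess_entropy_eq_weighted_second_difference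
    {A : Type*} [MeasurableSpace A] [MeasurableSingletonClass A] [Fintype A]
    (hA : 2 ≤ Fintype.card A)
    (μ : Measure (ℕ → A)) [IsProbabilityMeasure μ]
    (hstat : MeasurePreserving (shift (A := A)) μ μ)
    (hμ : ℝ) (hrate : Tendsto (fun L : ℕ => blockH μ L / L) atTop (nhds hμ))
    (E : ℝ)
    (hE : Tendsto (fun N : ℕ => ∑ L ∈ Finset.range N, (blockH μ (L + 1) - blockH μ L - hμ))
      atTop (nhds E)) :
    Tendsto (fun N : ℕ => ∑ L ∈ Finset.range N,
        ((L : ℝ) + 1) * (blockH μ (L + 2) - 2 * blockH μ (L + 1) + blockH μ L))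
      atTop (nhds (-E)) := by
  set Δ : ℕ → ℝ := fun L => blockH μ (L + 1) - blockH μ L - hμ with hΔdef
  set S : ℕ → ℝ := fun N => ∑ L ∈ Finset.range N, Δ L with hSdef
  have hES : Tendsto S atTop (nhds E) := hE
  -- Δ tends to 0
  have hΔ0 : Tendsto Δ atTop (nhds 0) := by
    have h1 : Tendsto (fun n : ℕ => S (n + 1) - S n) atTop (nhds (E - E)) :=
      (hES.comp (tendsto_add_atTop_nat 1)).sub hES
    have h2 : (fun n : ℕ => S (n + 1) - S n) = Δ := by
      funext n
      simp [hSdef, Finset.sum_range_succ]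
    rw [h2] at h1
    simpa using h1
  -- Δ is antitone
  have hanti : ∀ {m n : ℕ}, m ≤ n → Δ n ≤ Δ m := by
    have hstep : ∀ L, Δ (L + 1) ≤ Δ L := by
      intro L
      have := blockH_submod μ hstat L
      simp only [hΔdef]
      have h2 : L + 1 + 1 = L + 2 := rfl
      rw [h2]
      linarith
    intro m n h
    exact antitone_nat_of_succ_le hstep h
  -- Δ is nonnegative
  have hpos : ∀ L, 0 ≤ Δ L := fun L =>
    le_of_tendsto hΔ0 (Filter.eventually_atTop.2 ⟨L, fun n hn => hanti hn⟩)
  -- n * Δ n → 0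
  have key : Tendsto (fun n : ℕ => (n : ℝ) * Δ n) atTop (nhds 0) := by
    have hhalf : Tendsto (fun n : ℕ => n / 2) atTop atTop :=
      Filter.tendsto_atTop_atTop.2 fun b => ⟨2 * b, fun n hn => by omega⟩
    have h2 : Tendsto (fun n : ℕ => 2 * (S n - S (n / 2))) atTop (nhds (2 * (E - E))) :=
      (hES.sub (hES.comp hhalf)).const_mul 2
    rw [show 2 * (E - E) = 0 by ring] at h2
    refine tendsto_of_tendsto_of_tendsto_of_le_of_le' tendsto_const_nhds h2 ?_ ?_
    · exact Filter.Eventually.of_forall fun n => mul_nonneg (Nat.cast_nonneg n) (hpos n)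
    · refine Filter.eventually_atTop.2 ⟨1, fun n hn => ?_⟩
      set m := n / 2 with hm
      have hmn : m ≤ n := Nat.div_le_self n 2
      have hsum : S n - S m = ∑ L ∈ Finset.Ico m n, Δ L := by
        rw [hSdef]
        simp only
        rw [Finset.sum_Ico_eq_sub _ hmn]
      have hlb : ((n - m : ℕ) : ℝ) * Δ n ≤ ∑ L ∈ Finset.Ico m n, Δ L := by
        have := Finset.card_nsmul_le_sum (Finset.Ico m n) Δ (Δ n)
          (fun L hL => hanti (le_of_lt (Finset.mem_Ico.1 hL).2))
        rwa [Nat.card_Ico, nsmul_eq_mul] at this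
      have hcast : (n : ℝ) ≤ 2 * ((n - m : ℕ) : ℝ) := by
        have : n ≤ 2 * (n - m) := by omega
        exact_mod_cast this
      calc (n : ℝ) * Δ n ≤ 2 * ((n - m : ℕ) : ℝ) * Δ n :=
            mul_le_mul_of_nonneg_right hcast (hpos n)
        _ = 2 * (((n - m : ℕ) : ℝ) * Δ n) := by ring
        _ ≤ 2 * (∑ L ∈ Finset.Ico m n, Δ L) := by linarith [hlb]
        _ = 2 * (S n - S m) := by rw [hsum]
  -- conclude via Abel identity
  have hid : (fun N : ℕ => ∑ L ∈ Finset.range N,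
      ((L : ℝ) + 1) * (blockH μ (L + 2) - 2 * blockH μ (L + 1) + blockH μ L))
      = fun N : ℕ => (N : ℝ) * Δ N - S N := by
    funext N
    exact abel_identity (blockH μ) hμ N
  rw [hid]
  have := key.sub hES
  simpa using this
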